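/- arXiv:1811.06155 — 2 statements merged into one kernel-verified Lean document; each statement's English description precedes it below -/
import Mathlib

section
/- For every natural number k there exists a strongly connected oriented graph D such that c(D) − c(G) > k, where G is the underlying undirected graph of D. -/
open Classical

universe u

namespace CopsRobbers

variable {V : Type u}

/-- `CatchIn A k t c r` holds when, in the cops-and-robbers game on the digraph
with arc relation `A`, with the `k` cops currently at positions `c`, the robber
currently at `r`, and the cops to move, the cops can guarantee that some cop
occupies the robber's vertex within `t` further rounds (in each round every cop
either stays or moves along an out-arc, then the robber either stays or moves
along an out-arc; capture may occur right after the cops' move or after the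
robber's move). -/
inductive CatchIn (A : V → V → Prop) (k : ℕ) : ℕ → (Fin k → V) → V → Prop
  | caught {t : ℕ} {c : Fin k → V} {r : V} (h : ∃ i, c i = r) : CatchIn A k t c r
  | stepCatch {t : ℕ} {c : Fin k → V} {r : V} (c' : Fin k → V)
      (hc : ∀ i, c' i = c i ∨ A (c i) (c' i)) (h : ∃ i, c' i = r) :
      CatchIn A k (t + 1) c r
  | step {t : ℕ} {c : Fin k → V} {r : V} (c' : Fin k → V)
      (hc : ∀ i, c' i = c i ∨ A (c i) (c' i))
      (h : ∀ r' : V, r' = r ∨ A r r' → CatchIn A k t c' r') :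
      CatchIn A k (t + 1) c r

/-- `k` cops can choose initial positions guaranteeing capture within `t` rounds,
no matter which starting vertex the robber then chooses. -/
def CopsWinIn (A : V → V → Prop) (k t : ℕ) : Prop :=
  ∃ c : Fin k → V, ∀ r : V, CatchIn A k t c r

/-- `k` cops have a winning strategy on the digraph with arc relation `A`. -/
def CopsWin (A : V → V → Prop) (k : ℕ) : Prop := ∃ t, CopsWinIn A k t

/-- The cop number of a digraph: the least `k` such that `k` cops have a winning
strategy. -/
noncomputable def copNumber (A : V → V → Prop) : ℕ := sInf {k | CopsWin A k}

/-- The capture time of a digraph: the least `t` such that `copNumber A` cops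
can guarantee capture within `t` rounds. -/
noncomputable def captureTime (A : V → V → Prop) : ℕ :=
  sInf {t | CopsWinIn A (copNumber A) t}

/-- `A` is an orientation of the simple graph `G`: each edge of `G` is given
exactly one direction, and there are no other arcs. -/
def IsOrientation (G : SimpleGraph V) (A : V → V → Prop) : Prop :=
  (∀ u v, G.Adj u v ↔ (A u v ∨ A v u)) ∧ ∀ u v, A u v → ¬ A v u

/-- An oriented graph: a digraph with no loops and no pair of opposite arcs. -/
def IsOriented (A : V → V → Prop) : Prop := ∀ u v, A u v → ¬ A v u

/-- A digraph is strongly connected if every vertex is reachable from every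
other by a directed path. -/
def StronglyConnected (A : V → V → Prop) : Prop :=
  ∀ u v : V, Relation.ReflTransGen A u v


lemma evade {A : V → V → Prop} {n : ℕ} (R : V → Prop)
    (h1 : ∀ c : Fin n → V, ∃ r, R r ∧ ∀ i, c i ≠ r ∧ ¬ A (c i) r)
    (h2 : ∀ r, R r → ∀ c : Fin n → V, (∀ i, c i ≠ r) →
      ∃ r', R r' ∧ (r' = r ∨ A r r') ∧ ∀ i, c i ≠ r' ∧ ¬ A (c i) r') :
    ¬ CopsWin A n := by
  rintro ⟨t, c, hc⟩
  obtain ⟨r, hR, hr⟩ := h1 c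
  have key : ∀ {t : ℕ} {c : Fin n → V} {r : V}, CatchIn A n t c r → R r →
      (∀ i, c i ≠ r ∧ ¬ A (c i) r) → False := by
    intro t c r hcatch
    induction hcatch with
    | @caught t2 c2 r2 h =>
      intro _ inv
      obtain ⟨i, hi⟩ := h
      exact (inv i).1 hi
    | @stepCatch t2 c2 r2 c' hc' h =>
      intro _ inv
      obtain ⟨i, hi⟩ := h
      rcases hc' i with he | ha
      · exact (inv i).1 (by rw [← he]; exact hi)
      · rw [hi] at ha; exact (inv i).2 ha
    | @step t2 c2 r2 c' hc' h ih =>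
      intro hR2 inv
      have hne : ∀ i, c' i ≠ r2 := by
        intro i he
        rcases hc' i with ha | hb
        · exact (inv i).1 (by rw [← ha]; exact he)
        · rw [he] at hb; exact (inv i).2 hb
      obtain ⟨r', hR', hmv, inv'⟩ := h2 r2 hR2 c' hne
      exact ih r' hmv hR' inv'
  exact key (hc r) hR hr


abbrev Base (p : ℕ) := ZMod p × ZMod p

def gen (p : ℕ) (x : ZMod p) : Base p := (x, x^2)

def Arc (p : ℕ) : Option (Base p) → Option (Base p) → Prop
  | some u, some v => ∃ x : ZMod p, x ≠ 0 ∧ v = u + gen p x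
  | some u, none => u ≠ 0
  | none, some v => v = 0
  | none, none => False

lemma gen_inj {p : ℕ} {x y : ZMod p} (h : gen p x = gen p y) : x = y := congrArg Prod.fst h

lemma gen_eq_zero {p : ℕ} {x : ZMod p} (h : gen p x = 0) : x = 0 := congrArg Prod.fst h

lemma sidon {p : ℕ} [Fact p.Prime] (h2 : (2:ZMod p) ≠ 0) {x s y t : ZMod p}
    (hd : gen p x - gen p s = gen p y - gen p t) (hne : x ≠ s) : x = y ∧ s = t := by
  have e1 : x - s = y - t := congrArg Prod.fst hd
  have e2 : x^2 - s^2 = y^2 - t^2 := congrArg Prod.snd hd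
  have hds : x - s ≠ 0 := sub_ne_zero.mpr hne
  have e3 : (x - s) * (x + s) = (x - s) * (y + t) := by
    calc (x-s)*(x+s) = x^2 - s^2 := by ring
      _ = y^2 - t^2 := e2
      _ = (y-t)*(y+t) := by ring
      _ = (x-s)*(y+t) := by rw [← e1]
  have e4 : x + s = y + t := mul_left_cancel₀ hds e3
  have ex : 2*x = 2*y := by linear_combination e1 + e4
  have hx : x = y := mul_left_cancel₀ h2 ex
  exact ⟨hx, by linear_combination hx - e1⟩

lemma arc_asymm {p : ℕ} [Fact p.Prime] (h2 : (2:ZMod p) ≠ 0) :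
    ∀ u v, Arc p u v → ¬ Arc p v u := by
  rintro (_|u) (_|v) h h'
  · exact h
  · exact h' h
  · exact h h'
  · obtain ⟨x, hx, hxe⟩ := h
    obtain ⟨y, hy, hye⟩ := h'
    have hz : gen p x + gen p y = 0 := by
      rw [hxe, add_assoc] at hye
      exact (left_eq_add.mp hye)
    have h1 : x + y = 0 := congrArg Prod.fst hz
    have hsq : x^2 + y^2 = 0 := congrArg Prod.snd hz
    have hyx : y = -x := by linear_combination h1
    rw [hyx] at hsq
    have : 2 * x^2 = 0 := by linear_combination hsq
    rcases mul_eq_zero.mp this with h | h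
    · exact h2 h
    · exact hx (sq_eq_zero_iff.mp h)

lemma reach_nsmul (p : ℕ) (x : ZMod p) (hx : x ≠ 0) (u : Base p) (n : ℕ) :
    Relation.ReflTransGen (Arc p) (some u) (some (u + n • gen p x)) := by
  induction n with
  | zero => simpa using Relation.ReflTransGen.refl
  | succ n ih =>
    refine ih.tail ?_
    exact ⟨x, hx, by rw [succ_nsmul, ← add_assoc]⟩

lemma base_reach (p : ℕ) [Fact p.Prime] (h2 : (2:ZMod p) ≠ 0) (u v : Base p) :
    Relation.ReflTransGen (Arc p) (some u) (some v) := by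
  haveI : NeZero p := ⟨(Fact.out : p.Prime).ne_zero⟩
  have hm1 : (-1 : ZMod p) ≠ 0 := neg_ne_zero.mpr one_ne_zero
  set a : ZMod p := ((v - u).2 + (v - u).1) * 2⁻¹ with ha
  set b : ZMod p := ((v - u).2 - (v - u).1) * 2⁻¹ with hb
  have cast_smul : ∀ (c : ZMod p) (g : Base p), (c.val : ℕ) • g = c • g := by
    intro c g
    rw [← Nat.cast_smul_eq_nsmul (ZMod p), ZMod.natCast_val, ZMod.cast_id]
  have r1 := reach_nsmul p 1 one_ne_zero u a.val
  have r2 := reach_nsmul p (-1) hm1 (u + a.val • gen p 1) b.val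
  have key : u + a.val • gen p 1 + b.val • gen p (-1) = v := by
    rw [cast_smul, cast_smul]
    have hgen1 : gen p 1 = (1,1) := by simp [gen]
    have hgenm1 : gen p (-1) = (-1,1) := by simp [gen]
    rw [hgen1, hgenm1]
    obtain ⟨u1, u2⟩ := u; obtain ⟨v1, v2⟩ := v
    simp only [ha, hb, Prod.smul_mk, smul_eq_mul, Prod.mk_add_mk, Prod.mk.injEq,
      Prod.snd_sub, Prod.fst_sub] at *
    constructor <;> · field_simp; ring
  rw [key] at r2
  exact r1.trans r2

lemma initial_safe (p : ℕ) [Fact p.Prime] {n : ℕ} (hn : n < p)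
    (c : Fin n → Option (Base p)) :
    ∃ w : Base p, ∀ i, c i ≠ some w ∧ ¬ Arc p (c i) (some w) := by
  haveI : NeZero p := ⟨(Fact.out : p.Prime).ne_zero⟩
  classical
  set T : Fin n → Finset (Base p) := fun i =>
    match c i with
    | some u => Finset.univ.image (fun s : ZMod p => u + gen p s)
    | none => {0} with hT
  set Bad : Finset (Base p) :=
    Finset.univ.filter (fun w => ∃ i, c i = some w ∨ Arc p (c i) (some w)) with hBad
  have hsub : Bad ⊆ Finset.univ.biUnion T := by
    intro w hw
    simp only [hBad, Finset.mem_filter] at hw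
    obtain ⟨-, i, hi⟩ := hw
    refine Finset.mem_biUnion.mpr ⟨i, Finset.mem_univ i, ?_⟩
    rcases hci : c i with _ | u
    · rw [hci] at hi
      simp only [hT, hci]
      rcases hi with hi | hi
      · exact absurd hi (by simp)
      · have : w = 0 := hi
        simp [this]
    · rw [hci] at hi
      simp only [hT, hci, Finset.mem_image]
      rcases hi with hi | hi
      · exact ⟨0, Finset.mem_univ 0, by simp [gen, (Option.some.inj hi)]⟩
      · obtain ⟨s, -, hs⟩ := hi
        exact ⟨s, Finset.mem_univ s, hs.symm⟩
  have hTcard : ∀ i, (T i).card ≤ p := by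
    intro i
    simp only [hT]
    rcases c i with _ | u
    · simpa using (Fact.out : p.Prime).one_lt.le
    · calc (Finset.univ.image (fun s : ZMod p => u + gen p s)).card
          ≤ (Finset.univ : Finset (ZMod p)).card := Finset.card_image_le
        _ = p := by rw [Finset.card_univ, ZMod.card]
  have hBadcard : Bad.card ≤ n * p := by
    calc Bad.card ≤ (Finset.univ.biUnion T).card := Finset.card_le_card hsub
      _ ≤ ∑ i : Fin n, (T i).card := Finset.card_biUnion_le
      _ ≤ ∑ _i : Fin n, p := Finset.sum_le_sum (fun i _ => hTcard i)
      _ = n * p := by simp [Finset.sum_const, mul_comm]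
  have hlt : Bad.card < (Finset.univ : Finset (Base p)).card := by
    have : (Finset.univ : Finset (Base p)).card = p * p := by
      rw [Finset.card_univ, Fintype.card_prod, ZMod.card]
    rw [this]
    exact lt_of_le_of_lt hBadcard ((Nat.mul_lt_mul_right (Fact.out : p.Prime).pos).mpr hn)
  have hns : ¬ (Finset.univ : Finset (Base p)) ⊆ Bad := fun h =>
    absurd (Finset.card_le_card h) (not_le.mpr hlt)
  obtain ⟨w, -, hwBad⟩ := Finset.not_subset.mp hns
  refine ⟨w, fun i => ?_⟩
  simp only [hBad, Finset.mem_filter, Finset.mem_univ, true_and, not_exists, not_or] at hwBad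
  exact hwBad i

lemma step_safe (p : ℕ) [Fact p.Prime] (h2 : (2:ZMod p) ≠ 0) {n : ℕ} (hn : n < p)
    (v : Base p) (c : Fin n → Option (Base p)) (hc : ∀ i, c i ≠ some v) :
    ∃ x : ZMod p, ∀ i, c i ≠ some (v + gen p x) ∧ ¬ Arc p (c i) (some (v + gen p x)) := by
  haveI : NeZero p := ⟨(Fact.out : p.Prime).ne_zero⟩
  classical
  set O : Finset (Base p) := Finset.univ.image (fun x : ZMod p => v + gen p x) with hO
  have hOcard : O.card = p := by
    rw [hO, Finset.card_image_of_injective _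
      (fun x y h => gen_inj (add_left_cancel h)), Finset.card_univ, ZMod.card]
  set Bad : Finset (Base p) :=
    O.filter (fun w => ∃ i, c i = some w ∨ Arc p (c i) (some w)) with hBad
  have hBi : ∀ i : Fin n,
      (O.filter (fun w => c i = some w ∨ Arc p (c i) (some w))).card ≤ 1 := by
    intro i
    rw [Finset.card_le_one]
    intro w1 hw1 w2 hw2
    simp only [Finset.mem_filter, hO, Finset.mem_image] at hw1 hw2
    obtain ⟨⟨x, -, rfl⟩, hk1⟩ := hw1
    obtain ⟨⟨y, -, rfl⟩, hk2⟩ := hw2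
    rcases hci : c i with _ | u
    · rw [hci] at hk1 hk2
      have e1 : v + gen p x = 0 := by
        rcases hk1 with h | h
        · exact absurd h (by simp)
        · exact h
      have e2 : v + gen p y = 0 := by
        rcases hk2 with h | h
        · exact absurd h (by simp)
        · exact h
      rw [e1, e2]
    · rw [hci] at hk1 hk2
      have hu : u ≠ v := fun h => hc i (by rw [hci, h])
      have e1 : ∃ s : ZMod p, v + gen p x = u + gen p s := by
        rcases hk1 with h | h
        · exact ⟨0, by simp [gen, Option.some.inj h]⟩
        · obtain ⟨s, -, hs⟩ := h; exact ⟨s, hs⟩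
      have e2 : ∃ t : ZMod p, v + gen p y = u + gen p t := by
        rcases hk2 with h | h
        · exact ⟨0, by simp [gen, Option.some.inj h]⟩
        · obtain ⟨t, -, ht⟩ := h; exact ⟨t, ht⟩
      obtain ⟨s, hs⟩ := e1
      obtain ⟨t, ht⟩ := e2
      have hA : gen p x - gen p s = u - v := by linear_combination hs
      have hB : gen p y - gen p t = u - v := by linear_combination ht
      have hxs : x ≠ s := by
        intro h
        rw [h, sub_self] at hA
        exact hu (by linear_combination -hA)
      obtain ⟨hxy, -⟩ := sidon h2 (hA.trans hB.symm) hxs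
      rw [hxy]
  have hBadcard : Bad.card ≤ n := by
    have hsub : Bad ⊆ Finset.univ.biUnion (fun i : Fin n =>
        O.filter (fun w => c i = some w ∨ Arc p (c i) (some w))) := by
      intro w hw
      simp only [hBad, Finset.mem_filter] at hw
      obtain ⟨hwO, i, hi⟩ := hw
      exact Finset.mem_biUnion.mpr ⟨i, Finset.mem_univ i, Finset.mem_filter.mpr ⟨hwO, hi⟩⟩
    calc Bad.card ≤ _ := Finset.card_le_card hsub
      _ ≤ ∑ i : Fin n, (O.filter (fun w => c i = some w ∨ Arc p (c i) (some w))).card :=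
          Finset.card_biUnion_le
      _ ≤ ∑ _i : Fin n, 1 := Finset.sum_le_sum (fun i _ => hBi i)
      _ = n := by simp
  have hlt : Bad.card < O.card := by rw [hOcard]; exact lt_of_le_of_lt hBadcard hn
  have hns : ¬ O ⊆ Bad := fun h => absurd (Finset.card_le_card h) (not_le.mpr hlt)
  obtain ⟨w, hwO, hwBad⟩ := Finset.not_subset.mp hns
  obtain ⟨x, -, rfl⟩ := Finset.mem_image.mp (hO ▸ hwO)
  refine ⟨x, fun i => ?_⟩
  simp only [hBad, Finset.mem_filter, not_and, not_exists, not_or] at hwBad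
  exact hwBad hwO i

def UG (p : ℕ) : SimpleGraph (Option (Base p)) where
  Adj u v := Arc p u v ∨ Arc p v u
  symm := ⟨fun u v h => Or.symm h⟩
  loopless := ⟨by
    rintro (_|u) h
    · exact h.elim id id
    · rcases h with ⟨x, hx, he⟩ | ⟨x, hx, he⟩ <;>
        exact hx (gen_eq_zero (left_eq_add.mp he))⟩

lemma ug_win (p : ℕ) : CopsWin (UG p).Adj 1 := by
  refine ⟨1, fun _ => none, ?_⟩
  rintro (_|v)
  · exact CatchIn.caught ⟨0, rfl⟩
  · refine CatchIn.stepCatch (fun _ => some v) (fun i => Or.inr ?_) ⟨0, rfl⟩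
    show Arc p none (some v) ∨ Arc p (some v) none
    by_cases hv : v = 0
    · exact Or.inl hv
    · exact Or.inr hv

lemma arc_win (p : ℕ) [NeZero p] : CopsWin (Arc p) (Fintype.card (Option (Base p))) :=
  ⟨0, fun i => (Fintype.equivFin (Option (Base p))).symm i, fun r =>
    CatchIn.caught ⟨Fintype.equivFin _ r, by simp⟩⟩

lemma arc_strong (p : ℕ) [Fact p.Prime] (h2 : (2:ZMod p) ≠ 0) :
    StronglyConnected (Arc p) := by
  haveI : NeZero p := ⟨(Fact.out : p.Prime).ne_zero⟩
  rintro (_|u) (_|v)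
  · exact Relation.ReflTransGen.refl
  · exact Relation.ReflTransGen.head (show Arc p none (some (0:Base p)) from rfl) (base_reach p h2 0 v)
  · refine (base_reach p h2 u (gen p 1)).tail ?_
    show gen p 1 ≠ 0
    exact fun h => one_ne_zero (gen_eq_zero h)
  · exact base_reach p h2 u v

lemma no_win (p : ℕ) [Fact p.Prime] (h2 : (2:ZMod p) ≠ 0) {n : ℕ} (hn : n < p) :
    ¬ CopsWin (Arc p) n := by
  apply evade (fun r => ∃ w : Base p, r = some w)
  · intro c
    obtain ⟨w, hw⟩ := initial_safe p hn c
    exact ⟨some w, ⟨w, rfl⟩, hw⟩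
  · rintro r ⟨v, rfl⟩ c hc
    obtain ⟨x, hx⟩ := step_safe p h2 hn v c hc
    refine ⟨some (v + gen p x), ⟨_, rfl⟩, ?_, hx⟩
    by_cases h0 : x = 0
    · exact Or.inl (by simp [h0, gen])
    · exact Or.inr ⟨x, h0, rfl⟩


/-- For every `k` there is a strongly connected oriented graph `D` with
`c(D) - c(G) > k`, where `G` is the underlying undirected graph of `D`. -/
theorem stmt_4 (k : ℕ) :
    ∃ (V : Type) (_ : Fintype V) (G : SimpleGraph V) (A : V → V → Prop),
      IsOrientation G A ∧ StronglyConnected A ∧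
      copNumber G.Adj + k < copNumber A := by
  obtain ⟨p, hple, hp⟩ := Nat.exists_infinite_primes (k + 3)
  haveI : Fact p.Prime := ⟨hp⟩
  haveI : NeZero p := ⟨hp.ne_zero⟩
  have h2 : (2 : ZMod p) ≠ 0 := by
    intro h
    have h' : ((2:ℕ) : ZMod p) = 0 := by exact_mod_cast h
    have hd := (ZMod.natCast_eq_zero_iff 2 p).mp h'
    have := Nat.le_of_dvd two_pos hd
    omega
  refine ⟨Option (Base p), inferInstance, UG p, Arc p,
    ⟨fun u v => Iff.rfl, arc_asymm h2⟩, arc_strong p h2, ?_⟩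
  have hG : copNumber (UG p).Adj ≤ 1 := Nat.sInf_le (ug_win p)
  have hA : k + 2 ≤ copNumber (Arc p) := by
    have hne : {n | CopsWin (Arc p) n}.Nonempty := ⟨_, arc_win p⟩
    have hmem := Nat.sInf_mem hne
    by_contra hlt
    push_neg at hlt
    exact no_win p h2 (show copNumber (Arc p) < p by omega) hmem
  omega

end CopsRobbers
end

section
/- If D is a nonempty finite oriented graph in which every vertex has in-degree at least 1 (i.e. D has no source), then the cop number of D is at least 2. -/
open Classical

universe u

namespace CopsRobbers

variable {V : Type u}

lemma no_catch_zero (A : V → V → Prop) {t : ℕ} {c : Fin 0 → V} {r : V} :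
    ¬ CatchIn A 0 t c r := by
  intro h
  induction h with
  | caught h => obtain ⟨i, _⟩ := h; exact i.elim0
  | stepCatch c' hc h => obtain ⟨i, _⟩ := h; exact i.elim0
  | @step t' c' r' cc hc h ih => exact ih r' (Or.inl rfl)

lemma no_catch_one (A : V → V → Prop) (hA : IsOriented A) :
    ∀ {t : ℕ} {c : Fin 1 → V} {r : V}, CatchIn A 1 t c r → A r (c 0) → False := by
  intro t c r h
  induction h with
  | @caught t1 c1 r1 h =>
      intro hr
      obtain ⟨i, hi⟩ := h
      have hi0 : c1 0 = r1 := by rw [Subsingleton.elim (0 : Fin 1) i, hi]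
      rw [hi0] at hr
      exact hA r1 r1 hr hr
  | @stepCatch t1 c1 r1 c' hc h =>
      intro hr
      obtain ⟨i, hi⟩ := h
      have hi0 : c' 0 = r1 := by rw [Subsingleton.elim (0 : Fin 1) i, hi]
      rcases hc 0 with h0 | h0
      · rw [hi0] at h0; rw [← h0] at hr; exact hA r1 r1 hr hr
      · rw [hi0] at h0; exact hA r1 (c1 0) hr h0
  | @step t1 c1 r1 c' hc h ih =>
      intro hr
      rcases hc 0 with h0 | h0
      · exact ih r1 (Or.inl rfl) (h0 ▸ hr)
      · exact ih (c1 0) (Or.inr hr) h0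

lemma copsWin_card (A : V → V → Prop) [Fintype V] : CopsWin A (Fintype.card V) := by
  refine ⟨0, (Fintype.equivFin V).symm, fun r => ?_⟩
  exact CatchIn.caught ⟨Fintype.equivFin V r, Equiv.symm_apply_apply _ _⟩

/-- A nonempty finite oriented graph in which every vertex has in-degree at
least one (no sources) has cop number at least `2`. -/
theorem stmt_15 {V : Type u} [Fintype V] [Nonempty V] (A : V → V → Prop)
    (hA : IsOriented A) (h : ∀ v : V, ∃ u : V, A u v) :
    2 ≤ copNumber A := by
  refine le_csInf ⟨Fintype.card V, copsWin_card A⟩ ?_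
  intro k hk
  by_contra hlt
  push_neg at hlt
  interval_cases k
  · obtain ⟨t, c, hc⟩ := hk
    exact no_catch_zero A (hc (Classical.arbitrary V))
  · obtain ⟨t, c, hc⟩ := hk
    obtain ⟨u, hu⟩ := h (c 0)
    exact no_catch_one A hA (hc u) hu

end CopsRobbers
end
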